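/- Let V be a finite-dimensional real inner product space of dimension 2n (n ≥ 1), let J : V → V be a linear isometry with J ∘ J = −id, and let A : V → V be a self-adjoint linear operator satisfying A ∘ J = −J ∘ A. Then there exist vectors e₁, …, e_n ∈ V and real numbers λ₁, …, λ_n such that the family (e₁, J e₁, …, e_n, J e_n) is an orthonormal basis of V and, for each i, A e_i = λ_i e_i and A (J e_i) = −λ_i (J e_i). -/

import Mathlib

open scoped RealInnerProductSpace

universe u

theorem shape_aux (n : ℕ) :
    ∀ {V : Type u} [NormedAddCommGroup V] [InnerProductSpace ℝ V] [FiniteDimensional ℝ V]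
      (J A : V →ₗ[ℝ] V), Module.finrank ℝ V = 2 * n →
      (∀ x y : V, ⟪J x, J y⟫ = ⟪x, y⟫) →
      (∀ x : V, J (J x) = -x) →
      (∀ x y : V, ⟪A x, y⟫ = ⟪x, A y⟫) →
      (∀ x : V, A (J x) = -(J (A x))) →
      ∃ (e : Fin n → V) (l : Fin n → ℝ),
        Orthonormal ℝ (Sum.elim e (fun i => J (e i))) ∧
        ∀ i : Fin n, A (e i) = l i • e i ∧ A (J (e i)) = (-(l i)) • J (e i) := by
  induction n with
  | zero =>
      intro V _ _ _ J A hdim hJiso hJ2 hA hAJ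
      refine ⟨Fin.elim0, Fin.elim0, ?_, fun i => i.elim0⟩
      rw [orthonormal_iff_ite]
      intro i
      rcases i with i | i <;> exact i.elim0
  | succ n ih =>
      intro V _ _ _ J A hdim hJiso hJ2 hA hAJ
      have hsym : A.IsSymmetric := fun x y => hA x y
      -- an eigenvector
      obtain ⟨u, μ, hAu, hu1⟩ : ∃ (u : V) (μ : ℝ), A u = μ • u ∧ ‖u‖ = 1 :=
        ⟨_, _, hsym.apply_eigenvectorBasis hdim ⟨0, by omega⟩,
          (hsym.eigenvectorBasis hdim).orthonormal.1 _⟩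
      have hJnorm : ∀ x : V, ‖J x‖ = ‖x‖ := by
        intro x
        rw [@norm_eq_sqrt_real_inner, hJiso, ← @norm_eq_sqrt_real_inner]
      have hskew : ∀ x y : V, ⟪J x, y⟫ = -⟪x, J y⟫ := by
        intro x y
        have h := hJiso x (J y)
        rw [hJ2, inner_neg_right] at h
        linarith
      have huJu : ⟪u, J u⟫ = 0 := by
        have h := hskew u u
        have h2 : ⟪u, J u⟫ = ⟪J u, u⟫ := real_inner_comm (J u) u
        linarith
      have hAJu : A (J u) = (-μ) • J u := by
        rw [hAJ, hAu, map_smul]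
        exact (neg_smul μ (J u)).symm
      -- the orthogonal complement
      set K : Submodule ℝ V := Submodule.span ℝ {u, J u} with hK
      set W : Submodule ℝ V := Kᗮ with hW
      have hKW : ∀ x : V, x ∈ W ↔ ⟪u, x⟫ = 0 ∧ ⟪J u, x⟫ = 0 := by
        intro x
        have h1 : K = (ℝ ∙ u) ⊔ (ℝ ∙ (J u)) := by
          rw [hK, Submodule.span_insert]
        rw [hW, h1, ← Submodule.inf_orthogonal, Submodule.mem_inf,
          Submodule.mem_orthogonal_singleton_iff_inner_right,
          Submodule.mem_orthogonal_singleton_iff_inner_right]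
      -- dimension of W
      have hON2 : Orthonormal ℝ ![u, J u] := by
        rw [orthonormal_iff_ite]
        intro i j
        have h1 : ⟪u, u⟫ = (1:ℝ) := by
          rw [real_inner_self_eq_norm_sq, hu1]; norm_num
        have h2 : ⟪J u, J u⟫ = (1:ℝ) := by rw [hJiso]; exact h1
        have h3 : ⟪J u, u⟫ = (0:ℝ) := by
          rw [real_inner_comm]; exact huJu
        fin_cases i <;> fin_cases j <;>
          simp only [Matrix.cons_val_zero, Matrix.cons_val_one, Matrix.head_cons,
            Fin.mk.injEq] <;>
          norm_num [h1, h2, h3, huJu, hu1, hJnorm]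
      have hrange : Set.range ![u, J u] = {u, J u} := by
        ext x
        simp only [Set.mem_range, Fin.exists_fin_two, Matrix.cons_val_zero,
          Matrix.cons_val_one, Matrix.head_cons, Set.mem_insert_iff, Set.mem_singleton_iff]
        constructor
        · rintro (h | h) <;> [left; right] <;> simp [h]
        · rintro (h | h) <;> [left; right] <;> simp [h]
      have hK2 : Module.finrank ℝ K = 2 := by
        have h := finrank_span_eq_card hON2.linearIndependent
        rw [hrange] at h
        rw [hK, h]
        simp
      have hdimW : Module.finrank ℝ W = 2 * n := by
        have h := K.finrank_add_finrank_orthogonal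
        rw [hK2, hdim] at h
        rw [hW]; omega
      -- invariance
      have hJW : ∀ x ∈ W, J x ∈ W := by
        intro x hx
        obtain ⟨hx1, hx2⟩ := (hKW x).1 hx
        refine (hKW (J x)).2 ⟨?_, ?_⟩
        · have h3 := hskew u x
          linarith
        · rw [hJiso]; exact hx1
      have hAW : ∀ x ∈ W, A x ∈ W := by
        intro x hx
        obtain ⟨hx1, hx2⟩ := (hKW x).1 hx
        refine (hKW (A x)).2 ⟨?_, ?_⟩
        · rw [← hA, hAu, real_inner_smul_left, hx1]; ring
        · rw [← hA, hAJu, real_inner_smul_left, hx2]; ring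
      -- restricted operators
      let Jr : W →ₗ[ℝ] W := J.restrict hJW
      let Ar : W →ₗ[ℝ] W := A.restrict hAW
      have hJrc : ∀ x : W, (Jr x : V) = J (x : V) := fun x =>
        LinearMap.restrict_coe_apply J hJW x
      have hArc : ∀ x : W, (Ar x : V) = A (x : V) := fun x =>
        LinearMap.restrict_coe_apply A hAW x
      have hinner : ∀ x y : W, (⟪x, y⟫ : ℝ) = ⟪(x : V), (y : V)⟫ := fun x y => rfl
      obtain ⟨e, l, hON, heig⟩ :=
        ih Jr Ar hdimW
          (fun x y => by rw [hinner, hJrc, hJrc, hJiso, hinner])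
          (fun x => by
            apply Subtype.ext
            simp only [Submodule.coe_neg, hJrc, hJ2])
          (fun x y => by rw [hinner, hinner, hArc, hArc, hA])
          (fun x => by
            apply Subtype.ext
            simp only [Submodule.coe_neg, hArc, hJrc, hAJ])
      -- inner product dictionary
      have hONW := orthonormal_iff_ite.mp hON
      have d1 : ∀ i j : Fin n, ⟪(e i : V), (e j : V)⟫ = if i = j then (1:ℝ) else 0 := by
        intro i j
        have h := hONW (Sum.inl i) (Sum.inl j)
        simpa [hinner] using h
      have d2 : ∀ i j : Fin n, ⟪(e i : V), J (e j : V)⟫ = 0 := by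
        intro i j
        have h := hONW (Sum.inl i) (Sum.inr j)
        simpa [hinner, hJrc] using h
      have h1 : ⟪u, u⟫ = (1:ℝ) := by
        rw [real_inner_self_eq_norm_sq, hu1]; norm_num
      have ue : ∀ i : Fin n, ⟪u, (e i : V)⟫ = 0 ∧ ⟪J u, (e i : V)⟫ = 0 :=
        fun i => (hKW _).1 (e i).2
      have uJe : ∀ i : Fin n, ⟪u, J (e i : V)⟫ = 0 ∧ ⟪J u, J (e i : V)⟫ = 0 :=
        fun i => (hKW _).1 (hJW _ (e i).2)
      set E : Fin (n + 1) → V := Fin.cons u (fun i => (e i : V)) with hE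
      have hEE : ∀ i j : Fin (n + 1), ⟪E i, E j⟫ = if i = j then (1:ℝ) else 0 := by
        intro i j
        induction i using Fin.cases with
        | zero =>
            induction j using Fin.cases with
            | zero => simpa [hE] using h1
            | succ j =>
                rw [hE]
                simp only [Fin.cons_zero, Fin.cons_succ]
                rw [if_neg (Fin.succ_ne_zero j).symm]
                exact (ue j).1
        | succ i =>
            induction j using Fin.cases with
            | zero =>
                rw [hE]
                simp only [Fin.cons_zero, Fin.cons_succ]
                rw [if_neg (Fin.succ_ne_zero i), real_inner_comm]
                exact (ue i).1
            | succ j =>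
                rw [hE]
                simp only [Fin.cons_succ]
                rw [d1 i j]
                simp [Fin.succ_inj]
      have hEJE : ∀ i j : Fin (n + 1), ⟪E i, J (E j)⟫ = 0 := by
        intro i j
        induction i using Fin.cases with
        | zero =>
            induction j using Fin.cases with
            | zero => simpa [hE] using huJu
            | succ j =>
                rw [hE]; simp only [Fin.cons_zero, Fin.cons_succ]
                exact (uJe j).1
        | succ i =>
            induction j using Fin.cases with
            | zero =>
                rw [hE]; simp only [Fin.cons_zero, Fin.cons_succ]
                rw [real_inner_comm]
                exact (ue i).2
            | succ j =>
                rw [hE]; simp only [Fin.cons_succ]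
                exact d2 i j
      refine ⟨E, Fin.cons μ l, ?_, ?_⟩
      · rw [orthonormal_iff_ite]
        rintro (i | i) (j | j)
        · simpa using hEE i j
        · simpa using hEJE i j
        · rw [Sum.elim_inr, Sum.elim_inl, real_inner_comm]
          simpa using hEJE j i
        · simp only [Sum.elim_inr]
          rw [hJiso]
          simpa using hEE i j
      · intro i
        induction i using Fin.cases with
        | zero =>
            rw [hE]
            simp only [Fin.cons_zero]
            exact ⟨hAu, hAJu⟩
        | succ i =>
            obtain ⟨he1, he2⟩ := heig i
            constructor
            · have hc := congrArg Subtype.val he1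
              simp only [hArc, Submodule.coe_smul] at hc
              rw [hE]
              simpa [Fin.cons_succ] using hc
            · have hc := congrArg Subtype.val he2
              simp only [hArc, hJrc, Submodule.coe_smul, Submodule.coe_neg] at hc
              rw [hE]
              simpa [Fin.cons_succ] using hc

/-- Normal form of the shape operator of a Kähler hypersurface: if `V` is a real inner
product space of dimension `2n`, `J` is a linear isometry with `J² = −id`, and `A` is
self-adjoint with `A ∘ J = −J ∘ A`, then there is an orthonormal basis
`(e₁, Je₁, …, e_n, Je_n)` of `V` and reals `λ₁, …, λ_n` with `A eᵢ = λᵢ eᵢ` and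
`A (J eᵢ) = −λᵢ (J eᵢ)`. -/
theorem shape_operator_normal_form {V : Type*} [NormedAddCommGroup V]
    [InnerProductSpace ℝ V] [FiniteDimensional ℝ V] (n : ℕ) (hn : 1 ≤ n)
    (hdim : Module.finrank ℝ V = 2 * n)
    (J A : V →ₗ[ℝ] V)
    (hJiso : ∀ x y : V, ⟪J x, J y⟫ = ⟪x, y⟫)
    (hJ2 : ∀ x : V, J (J x) = -x)
    (hA : ∀ x y : V, ⟪A x, y⟫ = ⟪x, A y⟫)
    (hAJ : ∀ x : V, A (J x) = -(J (A x))) :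
    ∃ (e : Fin n → V) (l : Fin n → ℝ),
      Orthonormal ℝ (Sum.elim e (fun i => J (e i))) ∧
      Submodule.span ℝ (Set.range (Sum.elim e (fun i => J (e i)))) = ⊤ ∧
      ∀ i : Fin n, A (e i) = l i • e i ∧ A (J (e i)) = (-(l i)) • J (e i) := by
  obtain ⟨e, l, hON, heig⟩ := shape_aux n J A hdim hJiso hJ2 hA hAJ
  haveI : Nonempty (Fin n) := ⟨⟨0, hn⟩⟩
  refine ⟨e, l, hON, ?_, heig⟩
  apply hON.linearIndependent.span_eq_top_of_card_eq_finrank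
  simp [hdim, two_mul]
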